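/- Let M be a matroid on a finite ground set E, let ω be a weight function, let c ∈ ℝ, and set F = {x ∈ E : ω(x) ≤ c}. If e is an element of the closure of F in M that does not lie in F, then no ω-minimum base of M contains e. -/

import Mathlib

open Matroid

/-- The ω-weight of a set `B`: the sum of `ω` over the elements of `B`. -/
noncomputable def baseWeight {α : Type*} (ω : α → ℝ) (B : Set α) : ℝ := ∑ᶠ e ∈ B, ω e

/-- `B` is an ω-minimum base of `M`: it is a base whose ω-weight is
minimal among all bases of `M`. -/
def IsMinBase {α : Type*} (M : Matroid α) (ω : α → ℝ) (B : Set α) : Prop :=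
  M.IsBase B ∧ ∀ B', M.IsBase B' → baseWeight ω B ≤ baseWeight ω B'

/-- Let `F = {x ∈ M.E | ω x ≤ c}` be a sublevel set of the weight function `ω`.  If `e`
lies in the closure of `F` in `M` but not in `F`, then no ω-minimum base of `M`
contains `e`. -/
theorem not_mem_minBase_of_mem_closure_sublevel {α : Type*} (M : Matroid α)
    (hfin : M.E.Finite) (ω : α → ℝ) (c : ℝ) (e : α)
    (he : e ∈ M.closure {x ∈ M.E | ω x ≤ c}) (heF : e ∉ {x ∈ M.E | ω x ≤ c}) :
    ∀ B : Set α, IsMinBase M ω B → e ∉ B := by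
  intro B hB heB
  obtain ⟨hBbase, hmin⟩ := hB
  set F : Set α := {x ∈ M.E | ω x ≤ c} with hF
  have heE : e ∈ M.E := M.closure_subset_ground F he
  have hec : c < ω e := by
    by_contra h
    exact heF ⟨heE, le_of_not_gt h⟩
  have hIndep := hBbase.indep
  have hecl : e ∉ M.closure (B \ {e}) := hIndep.notMem_closure_diff_of_mem heB
  -- find f ∈ F not in closure of B \ {e}
  have hFsub : ¬ F ⊆ M.closure (B \ {e}) := by
    intro hsub
    have := M.closure_subset_closure_of_subset_closure hsub
    exact hecl (this he)
  obtain ⟨f, hfF, hfcl⟩ := Set.not_subset.mp hFsub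
  have hfB : f ∉ B := by
    intro hfB
    have hfe : f ≠ e := by rintro rfl; exact heF hfF
    exact hfcl (M.subset_closure_of_subset' Set.Subset.rfl
      ((Set.diff_subset).trans hBbase.subset_ground) ⟨hfB, hfe⟩)
  have hBdiff : M.Indep (B \ {e}) := hIndep.subset Set.diff_subset
  have hins : M.Indep (insert f (B \ {e})) := by
    rw [hBdiff.insert_indep_iff_of_notMem (fun h => hfcl (M.subset_closure _
      (Set.diff_subset.trans hBbase.subset_ground) h))]
    exact ⟨hfF.1, hfcl⟩
  have hB' : M.IsBase (insert f (B \ {e})) := hBbase.exchange_isBase_of_indep hfB hins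
  have hBfin : B.Finite := hfin.subset hBbase.subset_ground
  have hfin' : (B \ {e}).Finite := hBfin.subset Set.diff_subset
  have hfnot : f ∉ B \ {e} := fun h => hfB h.1
  have h1 : baseWeight ω (insert f (B \ {e})) = ω f + baseWeight ω (B \ {e}) :=
    finsum_mem_insert ω hfnot hfin'
  have h2 : baseWeight ω B = ω e + baseWeight ω (B \ {e}) := by
    have : B = insert e (B \ {e}) := by simp [Set.insert_diff_singleton, heB]
    rw [show baseWeight ω B = baseWeight ω (insert e (B \ {e})) from by rw [← this]]
    exact finsum_mem_insert ω (fun h => h.2 rfl) hfin'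
  have hlt : baseWeight ω (insert f (B \ {e})) < baseWeight ω B := by
    rw [h1, h2]
    have : ω f ≤ c := hfF.2
    linarith
  exact absurd (hmin _ hB') (not_le.mpr hlt)
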